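/- For every integer n ≥ 2: two distinct strings of B^{(n)} form a resolvable pair (i.e. are of the form z0 and z1 for a common string z) if and only if they are 1^{n−2}0 and 1^{n−1}, in which case their resolvent is 1^{n−2}. Consequently, every one-dimensional geometric resolution derivation of the empty string λ from B^{(n)} contains all the strings 1^{n−2}, 1^{n−3}, …, 1, λ and has at least n − 1 resolution steps. -/

import Mathlib

/-- The set `B⁽ⁿ⁾` of binary strings `{1^{i−1}0 : 1 ≤ i ≤ n−1} ∪ {1^{n−1}}`
(with `true` playing the role of the bit `1`). -/
def BSet (n : ℕ) : Set (List Bool) :=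
  {s | (∃ i : ℕ, 1 ≤ i ∧ i ≤ n - 1 ∧ s = List.replicate (i - 1) true ++ [false]) ∨
       s = List.replicate (n - 1) true}

/-- One-dimensional geometric resolution: `r` is the resolvent of `s = r0` and
`t = r1`. -/
def IsResolvent1 (s t r : List Bool) : Prop := s = r ++ [false] ∧ t = r ++ [true]

/-- A (tagged) one-dimensional geometric resolution derivation from a set `A`
of strings: an entry tagged `true` is the resolvent of two earlier entries; an
entry tagged `false` belongs to `A`. -/
def IsDerivation1 (A : Set (List Bool)) (L : List (Bool × List Bool)) : Prop :=
  ∀ k : Fin L.length,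
    if (L.get k).1 then
      ∃ i j : Fin L.length, (i : ℕ) < (k : ℕ) ∧ (j : ℕ) < (k : ℕ) ∧
        IsResolvent1 ((L.get i).2) ((L.get j).2) ((L.get k).2)
    else (L.get k).2 ∈ A

/-- For `n ≥ 2`: two distinct strings of `B⁽ⁿ⁾` are resolvable iff they are
`1^{n−2}0` and `1^{n−1}`, in which case the resolvent is `1^{n−2}`; hence every
one-dimensional geometric resolution derivation of the empty string from
`B⁽ⁿ⁾` contains all of `1^{n−2}, …, 1, λ` and has at least `n − 1` resolution
steps. -/
lemma bset_key (n : ℕ) (hn : 2 ≤ n) {t z : List Bool} (ht : t ∈ BSet n)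
    (hz : t = z ++ [true]) :
    z = List.replicate (n - 2) true ∧ t = List.replicate (n - 1) true := by
  rcases ht with ⟨i, hi1, hi2, rfl⟩ | rfl
  · exfalso
    have h := congrArg List.getLast? hz
    rw [List.getLast?_concat, List.getLast?_concat] at h
    simp at h
  · have hn1 : n - 1 = (n - 2) + 1 := by omega
    rw [hn1, List.replicate_succ'] at hz
    have := congrArg List.dropLast hz
    rw [List.dropLast_concat, List.dropLast_concat] at this
    exact ⟨this.symm, by rw [hn1, List.replicate_succ']⟩

lemma bset_notin (n : ℕ) (hn : 2 ≤ n) {k : ℕ} (hk : k ≤ n - 2) :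
    List.replicate k true ∉ BSet n := by
  rintro (⟨i, hi1, hi2, h⟩ | h)
  · have : (false : Bool) ∈ List.replicate k true := by
      rw [h]; simp
    simpa using List.eq_of_mem_replicate this
  · have := congrArg List.length h
    simp at this
    omega

lemma card_univ_filter_get {α : Type*} : ∀ (L : List α) (p : α → Bool),
    ((Finset.univ : Finset (Fin L.length)).filter
      (fun i => p (L.get i) = true)).card = (L.filter p).length
  | [], p => by simp
  | a :: l, p => by
    have h := Fin.card_filter_univ_succ'
      (fun i : Fin (l.length + 1) => p ((a :: l).get i) = true)
    simp only [show ∀ x : Fin l.length, (a :: l).get x.succ = l.get x from fun _ => rfl,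
      List.get_cons_zero] at h
    rw [List.filter_cons]
    rw [card_univ_filter_get l p] at h
    by_cases hp : p a = true <;> simp [hp] at h ⊢ <;> omega

lemma filter_length_ge {α : Type*} (L : List α) (p : α → Bool)
    (s : Finset (Fin L.length)) (hs : ∀ i ∈ s, p (L.get i) = true) :
    s.card ≤ (L.filter p).length := by
  calc s.card ≤ ((Finset.univ : Finset (Fin L.length)).filter
        (fun i => p (L.get i) = true)).card :=
      Finset.card_le_card (fun i hi => Finset.mem_filter.2 ⟨Finset.mem_univ _, hs i hi⟩)
    _ = (L.filter p).length := card_univ_filter_get L p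

theorem BSet_resolution (n : ℕ) (hn : 2 ≤ n) :
    (∀ s ∈ BSet n, ∀ t ∈ BSet n, s ≠ t →
      ((∃ z : List Bool, IsResolvent1 s t z) ↔
        (s = List.replicate (n - 2) true ++ [false] ∧
         t = List.replicate (n - 1) true))) ∧
    (∀ s ∈ BSet n, ∀ t ∈ BSet n, ∀ z : List Bool,
      IsResolvent1 s t z → z = List.replicate (n - 2) true) ∧
    (∀ L : List (Bool × List Bool), IsDerivation1 (BSet n) L →
      ([] : List Bool) ∈ L.map (·.2) →
      (∀ k ≤ n - 2, List.replicate k true ∈ L.map (·.2)) ∧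
      n - 1 ≤ (L.filter (·.1)).length) := by
  have hn1 : n - 1 = (n - 2) + 1 := by omega
  refine ⟨?_, ?_, ?_⟩
  · intro s hs t ht hst
    constructor
    · rintro ⟨z, hz1, hz2⟩
      obtain ⟨hz, ht'⟩ := bset_key n hn ht hz2
      exact ⟨hz ▸ hz1, ht'⟩
    · rintro ⟨rfl, rfl⟩
      exact ⟨List.replicate (n - 2) true, rfl, by rw [hn1, List.replicate_succ']⟩
  · rintro s hs t ht z ⟨h1, h2⟩
    exact (bset_key n hn ht h2).1
  · intro L hL hmem
    -- main claim
    have main : ∀ j, j ≤ n - 2 →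
        ∃ k : Fin L.length, (L.get k).1 = true ∧ (L.get k).2 = List.replicate j true := by
      intro j
      induction j with
      | zero =>
        intro _
        obtain ⟨x, hx, hx2⟩ := List.mem_map.1 hmem
        obtain ⟨k, hk⟩ := List.get_of_mem hx
        have hLk := hL k
        by_cases htag : (L.get k).1
        · exact ⟨k, htag, by rw [hk, hx2]; rfl⟩
        · exfalso
          simp only [htag, if_false] at hLk
          exact bset_notin n hn (Nat.zero_le _) (by rwa [hk, hx2] at hLk)
      | succ j ih =>
        intro hj
        obtain ⟨k, htag, hval⟩ := ih (by omega)
        have hLk := hL k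
        simp only [htag, if_true] at hLk
        obtain ⟨i, j', hi, hj', h1, h2⟩ := hLk
        have hval' : (L.get j').2 = List.replicate (j + 1) true := by
          rw [h2, hval, List.replicate_succ']
        refine ⟨j', ?_, hval'⟩
        by_cases htag' : (L.get j').1
        · exact htag'
        · exfalso
          have hLj := hL j'
          simp only [htag', if_false] at hLj
          exact bset_notin n hn hj (by rwa [hval'] at hLj)
    constructor
    · intro k hk
      obtain ⟨i, _, hval⟩ := main k hk
      exact List.mem_map.2 ⟨L.get i, List.get_mem L i, hval⟩
    · obtain ⟨k0, _, _⟩ := main 0 (Nat.zero_le _)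
      have main' : ∀ j : ℕ, ∃ k : Fin L.length,
          j ≤ n - 2 → (L.get k).1 = true ∧ (L.get k).2 = List.replicate j true := by
        intro j
        by_cases hj : j ≤ n - 2
        · obtain ⟨k, h1, h2⟩ := main j hj
          exact ⟨k, fun _ => ⟨h1, h2⟩⟩
        · exact ⟨k0, fun h => absurd h hj⟩
      choose g hg using main'
      have hinj : Set.InjOn g (Finset.range (n - 1)) := by
        intro a ha b hb hab
        simp only [Finset.coe_range, Set.mem_Iio] at ha hb
        have ha' := (hg a (by omega)).2
        have hb' := (hg b (by omega)).2
        rw [hab, hb'] at ha'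
        have := congrArg List.length ha'
        simpa using this.symm
      have hcard : ((Finset.range (n - 1)).image g).card = n - 1 := by
        rw [Finset.card_image_of_injOn hinj, Finset.card_range]
      calc n - 1 = ((Finset.range (n - 1)).image g).card := hcard.symm
        _ ≤ (L.filter (·.1)).length := by
          apply filter_length_ge
          intro i hi
          obtain ⟨a, ha, rfl⟩ := Finset.mem_image.1 hi
          simp only [Finset.mem_range] at ha
          exact (hg a (by omega)).1
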